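/- arXiv:0803.4355 — 3 statements merged into one kernel-verified Lean document; each statement's English description precedes it below -/
import Mathlib

section
/- Let n ≥ 1 and let P be an n×n real row-stochastic matrix (all entries nonnegative, each row summing to 1) that is irreducible (for every pair of indices i, j there exists m ≥ 1 with (P^m)_{i,j} > 0) and aperiodic (for every index i, the gcd of { m ≥ 1 : (P^m)_{i,i} > 0 } equals 1). Then there exists a unique probability vector π ∈ ℝ^n (entries nonnegative, summing to 1) satisfying πᵀ P = πᵀ; moreover every entry of π is strictly positive, and for every starting index x and every index i, (P^k)_{x,i} converges to π_i as k → ∞. -/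
open Finset

lemma aux_consec (S : Set ℕ)
    (hgcd : ∀ d : ℕ, (∀ m ∈ S, d ∣ m) → d = 1) :
    ∃ a b : ℕ, a ∈ AddSubmonoid.closure S ∧ b ∈ AddSubmonoid.closure S ∧ a = b + 1 := by
  set T := AddSubmonoid.closure S with hT
  -- the set of differences of elements of T, as an AddSubgroup of ℤ
  let D : AddSubgroup ℤ :=
  { carrier := {z | ∃ a b : ℕ, a ∈ T ∧ b ∈ T ∧ z = (a : ℤ) - b}
    zero_mem' := ⟨0, 0, zero_mem T, zero_mem T, by ring⟩
    add_mem' := by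
      rintro x y ⟨a, b, ha, hb, rfl⟩ ⟨c, d, hc, hd, rfl⟩
      exact ⟨a + c, b + d, add_mem ha hc, add_mem hb hd, by push_cast; ring⟩
    neg_mem' := by
      rintro x ⟨a, b, ha, hb, rfl⟩
      exact ⟨b, a, hb, ha, by ring⟩ }
  have hSD : ((↑) '' S : Set ℤ) ⊆ D := by
    rintro z ⟨s, hs, rfl⟩
    exact ⟨s, 0, AddSubmonoid.subset_closure hs, zero_mem T, by ring⟩
  have h1 : (1 : ℤ) ∈ D := by
    obtain ⟨g, hg⟩ := Int.subgroup_cyclic (AddSubgroup.closure ((↑) '' S : Set ℤ))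
    have hgdvd : ∀ m ∈ S, g.natAbs ∣ m := by
      intro m hm
      have : (m : ℤ) ∈ AddSubgroup.closure ((↑) '' S : Set ℤ) :=
        AddSubgroup.subset_closure ⟨m, hm, rfl⟩
      rw [hg, AddSubgroup.mem_closure_singleton] at this
      obtain ⟨k, hk⟩ := this
      have : g ∣ (m : ℤ) := Dvd.intro_left k (by rw [← hk]; simp [zsmul_eq_mul])
      exact Int.ofNat_dvd.mp (Int.natAbs_dvd.mpr this)
    have hg1 : g.natAbs = 1 := hgcd _ hgdvd
    have : (1 : ℤ) ∈ AddSubgroup.closure ((↑) '' S : Set ℤ) := by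
      rw [hg, AddSubgroup.mem_closure_singleton]
      rcases Int.natAbs_eq g with h | h
      · exact ⟨1, by rw [h, hg1]; simp⟩
      · exact ⟨-1, by rw [h, hg1]; simp⟩
    exact (AddSubgroup.closure_le D).mpr hSD this
  obtain ⟨a, b, ha, hb, hab⟩ := h1
  refine ⟨a, b, ha, hb, ?_⟩
  omega

lemma aux_cofinite (S : Set ℕ) (hadd : ∀ a ∈ S, ∀ b ∈ S, a + b ∈ S)
    (hgcd : ∀ d : ℕ, (∀ m ∈ S, d ∣ m) → d = 1) :
    ∃ N : ℕ, ∀ m, N ≤ m → m ∈ S := by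
  set T := AddSubmonoid.closure S with hT
  have hTS : ∀ t ∈ T, t ≠ 0 → t ∈ S := by
    intro t ht
    induction ht using AddSubmonoid.closure_induction with
    | mem s hs => exact fun _ => hs
    | zero => exact fun h => absurd rfl h
    | add a b ha hb iha ihb =>
      intro hab
      rcases Nat.eq_zero_or_pos a with h | h
      · subst h; simpa using ihb (by simpa using hab)
      rcases Nat.eq_zero_or_pos b with h' | h'
      · subst h'; simpa using iha (by simpa using hab)
      · exact hadd a (iha h.ne') b (ihb h'.ne')
  obtain ⟨a, b, ha, hb, hab⟩ := aux_consec S hgcd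
  refine ⟨b * b + 1, fun m hm => ?_⟩
  have hm1 : 1 ≤ m := le_trans (Nat.le_add_left 1 (b*b)) hm
  have hmT : m ∈ T := by
    rcases Nat.eq_zero_or_pos b with hb0 | hb0
    · subst hb0
      have : a = 1 := by omega
      subst this
      have : m • (1 : ℕ) ∈ T := nsmul_mem ha m
      simpa using this
    · set q := m / b with hq
      set r := m % b with hr
      have hrb : r < b := Nat.mod_lt _ hb0
      have hqb : b ≤ q := (Nat.le_div_iff_mul_le hb0).mpr (by nlinarith [Nat.lt_of_lt_of_le (Nat.lt_succ_self (b*b)) hm])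
      have hrq : r ≤ q := le_trans hrb.le hqb
      obtain ⟨t, ht⟩ : ∃ t, q = r + t := ⟨q - r, by omega⟩
      have hdm : b * q + r = m := Nat.div_add_mod m b
      have hmeq : m = (q - r) * b + r * a := by
        rw [ht, Nat.add_sub_cancel_left, ← hdm, ht, hab]; ring
      rw [hmeq]
      exact add_mem (by simpa [smul_eq_mul] using nsmul_mem hb (q - r))
        (by simpa [smul_eq_mul] using nsmul_mem ha r)
  exact hTS m hmT (by omega)


section
variable {n : ℕ} (P : Matrix (Fin n) (Fin n) ℝ)

lemma aux_pow_nonneg (hnonneg : ∀ i j, 0 ≤ P i j) (m : ℕ) (i j : Fin n) : 0 ≤ (P ^ m) i j := by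
  induction m generalizing i j with
  | zero => rw [pow_zero]; by_cases h : i = j <;> simp [Matrix.one_apply, h]
  | succ k ih =>
    rw [pow_succ, Matrix.mul_apply]
    exact Finset.sum_nonneg fun y _ => mul_nonneg (ih i y) (hnonneg y j)

lemma aux_pow_row (hrow : ∀ i, ∑ j, P i j = 1) (m : ℕ) (i : Fin n) : ∑ j, (P ^ m) i j = 1 := by
  induction m with
  | zero => simp [Matrix.one_apply]
  | succ k ih =>
    simp only [pow_succ, Matrix.mul_apply]
    rw [Finset.sum_comm]
    calc ∑ y, ∑ j, (P ^ k) i y * P y j = ∑ y, (P ^ k) i y * ∑ j, P y j := by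
          simp [Finset.mul_sum]
      _ = 1 := by simp [hrow, ih]

lemma aux_pow_prod_le (hnonneg : ∀ i j, 0 ≤ P i j) (a b : ℕ) (x z y : Fin n) :
    (P ^ a) x z * (P ^ b) z y ≤ (P ^ (a + b)) x y := by
  rw [pow_add, Matrix.mul_apply]
  exact Finset.single_le_sum
    (fun c _ => mul_nonneg (aux_pow_nonneg P hnonneg a x c) (aux_pow_nonneg P hnonneg b c y))
    (Finset.mem_univ z)

lemma aux_primitive (hnonneg : ∀ i j, 0 ≤ P i j)
    (hirr : ∀ i j, ∃ m, 1 ≤ m ∧ 0 < (P ^ m) i j)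
    (haper : ∀ i, ∀ d : ℕ, (∀ m, 1 ≤ m → 0 < (P ^ m) i i → d ∣ m) → d = 1) :
    ∃ N, 1 ≤ N ∧ ∀ x y, 0 < (P ^ N) x y := by
  have key : ∀ x y : Fin n, ∃ B, ∀ m, B ≤ m → 0 < (P ^ m) x y := by
    intro x y
    set S : Set ℕ := {m | 1 ≤ m ∧ 0 < (P ^ m) x x} with hS
    have hadd : ∀ a ∈ S, ∀ b ∈ S, a + b ∈ S := by
      rintro a ⟨ha1, ha2⟩ b ⟨hb1, hb2⟩
      exact ⟨by omega, lt_of_lt_of_le (mul_pos ha2 hb2) (aux_pow_prod_le P hnonneg a b x x x)⟩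
    have hgcd : ∀ d : ℕ, (∀ m ∈ S, d ∣ m) → d = 1 := by
      intro d hd
      exact haper x d fun m h1 h2 => hd m ⟨h1, h2⟩
    obtain ⟨B, hB⟩ := aux_cofinite S hadd hgcd
    obtain ⟨t, ht1, ht2⟩ := hirr x y
    refine ⟨B + t, fun m hm => ?_⟩
    have h1 : m - t ∈ S := hB _ (by omega)
    have h2 : 0 < (P ^ (m - t)) x x * (P ^ t) x y := mul_pos h1.2 ht2
    have h3 := aux_pow_prod_le P hnonneg (m - t) t x x y
    have h4 : m - t + t = m := by omega
    rw [h4] at h3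
    exact lt_of_lt_of_le h2 h3
  choose B hB using key
  refine ⟨(Finset.univ.sup fun x => Finset.univ.sup (B x)) + 1, le_add_self, fun x y => ?_⟩
  refine hB x y _ ?_
  calc B x y ≤ Finset.univ.sup (B x) := Finset.le_sup (Finset.mem_univ y)
    _ ≤ _ := le_trans (Finset.le_sup (f := fun x => Finset.univ.sup (B x)) (Finset.mem_univ x)) (Nat.le_succ _)

end
/-- An irreducible, aperiodic row-stochastic matrix has a unique stationary
probability vector `π`; moreover `π` is strictly positive and `(P^k) x i → π i`. -/
theorem stationary_distribution_of_irreducible_aperiodic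
    (n : ℕ) (hn : 1 ≤ n) (P : Matrix (Fin n) (Fin n) ℝ)
    (hnonneg : ∀ i j, 0 ≤ P i j)
    (hrow : ∀ i, ∑ j, P i j = 1)
    (hirr : ∀ i j, ∃ m, 1 ≤ m ∧ 0 < (P ^ m) i j)
    (haper : ∀ i, ∀ d : ℕ, (∀ m, 1 ≤ m → 0 < (P ^ m) i i → d ∣ m) → d = 1) :
    ∃ π : Fin n → ℝ,
      ((∀ i, 0 ≤ π i) ∧ (∑ i, π i) = 1 ∧ Matrix.vecMul π P = π) ∧
      (∀ π' : Fin n → ℝ,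
        ((∀ i, 0 ≤ π' i) ∧ (∑ i, π' i) = 1 ∧ Matrix.vecMul π' P = π') → π' = π) ∧
      (∀ i, 0 < π i) ∧
      (∀ x i, Filter.Tendsto (fun k : ℕ => (P ^ k) x i) Filter.atTop (nhds (π i))) := by
  have hne : Nonempty (Fin n) := ⟨⟨0, hn⟩⟩
  have hU : (Finset.univ : Finset (Fin n)).Nonempty := Finset.univ_nonempty
  obtain ⟨N, hN1, hNpos⟩ := aux_primitive P hnonneg hirr haper
  -- minimum and maximum of column i of P^k
  set mn : ℕ → Fin n → ℝ := fun k i => Finset.univ.inf' hU (fun x => (P ^ k) x i) with hmn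
  set mx : ℕ → Fin n → ℝ := fun k i => Finset.univ.sup' hU (fun x => (P ^ k) x i) with hmx
  have h_mn_le : ∀ k i x, mn k i ≤ (P ^ k) x i :=
    fun k i x => Finset.inf'_le (fun x => (P ^ k) x i) (Finset.mem_univ x)
  have h_le_mx : ∀ k i x, (P ^ k) x i ≤ mx k i :=
    fun k i x => Finset.le_sup' (fun x => (P ^ k) x i) (Finset.mem_univ x)
  have h_mn_mx : ∀ k i, mn k i ≤ mx k i :=
    fun k i => le_trans (h_mn_le k i (Classical.arbitrary _)) (h_le_mx k i _)
  -- one-step monotonicity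
  have h_step : ∀ k x i, (P ^ (k + 1)) x i = ∑ y, P x y * (P ^ k) y i := by
    intro k x i
    rw [pow_succ']
    simp [Matrix.mul_apply]
  have h_mn_mono : ∀ i, Monotone fun k => mn k i := by
    intro i
    refine monotone_nat_of_le_succ fun k => ?_
    refine Finset.le_inf' _ _ fun x _ => ?_
    rw [h_step]
    calc mn k i = ∑ y, P x y * mn k i := by
          rw [← Finset.sum_mul, hrow, one_mul]
      _ ≤ ∑ y, P x y * (P ^ k) y i :=
          Finset.sum_le_sum fun y _ =>
            mul_le_mul_of_nonneg_left (h_mn_le k i y) (hnonneg x y)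
  have h_mx_anti : ∀ i, Antitone fun k => mx k i := by
    intro i
    refine antitone_nat_of_succ_le fun k => ?_
    refine Finset.sup'_le _ _ fun x _ => ?_
    rw [h_step]
    calc ∑ y, P x y * (P ^ k) y i ≤ ∑ y, P x y * mx k i :=
          Finset.sum_le_sum fun y _ =>
            mul_le_mul_of_nonneg_left (h_le_mx k i y) (hnonneg x y)
      _ = mx k i := by rw [← Finset.sum_mul, hrow, one_mul]
  -- the minimal entry of P^N
  set δ : ℝ := Finset.univ.inf' Finset.univ_nonempty
      (fun p : Fin n × Fin n => (P ^ N) p.1 p.2) with hδ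
  have hδpos : 0 < δ := by
    rw [hδ, Finset.lt_inf'_iff]
    exact fun p _ => hNpos p.1 p.2
  have hδle : ∀ x y, δ ≤ (P ^ N) x y := fun x y =>
    Finset.inf'_le _ (Finset.mem_univ (x, y))
  -- contraction
  have h_split : ∀ k x i, (P ^ (N + k)) x i = ∑ y, (P ^ N) x y * (P ^ k) y i := by
    intro k x i
    rw [pow_add]
    simp [Matrix.mul_apply]
  have h_upper : ∀ k i x, (P ^ (N + k)) x i ≤ mx k i + δ * (mn k i - mx k i) := by
    intro k i x
    obtain ⟨y0, _, hy0⟩ := Finset.exists_mem_eq_inf' hU (fun x => (P ^ k) x i)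
    rw [h_split]
    have hQrow : ∑ y, (P ^ N) x y = 1 := aux_pow_row P hrow N x
    have key : ∑ y, (P ^ N) x y * (P ^ k) y i
        = mx k i + ∑ y, (P ^ N) x y * ((P ^ k) y i - mx k i) := by
      simp only [mul_sub, Finset.sum_sub_distrib, ← Finset.sum_mul, hQrow, one_mul]
      ring
    rw [key]
    have hterm : ∀ y ∈ Finset.univ.erase y0,
        (P ^ N) x y * ((P ^ k) y i - mx k i) ≤ 0 := fun y _ =>
      mul_nonpos_of_nonneg_of_nonpos (aux_pow_nonneg P hnonneg N x y)
        (sub_nonpos.mpr (h_le_mx k i y))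
    have hsum : ∑ y, (P ^ N) x y * ((P ^ k) y i - mx k i)
        ≤ (P ^ N) x y0 * ((P ^ k) y0 i - mx k i) := by
      rw [← Finset.add_sum_erase _ _ (Finset.mem_univ y0)]
      nlinarith [Finset.sum_nonpos hterm]
    have hy0' : (P ^ k) y0 i = mn k i := hy0.symm
    have hfinal : (P ^ N) x y0 * ((P ^ k) y0 i - mx k i) ≤ δ * (mn k i - mx k i) := by
      rw [hy0']
      exact mul_le_mul_of_nonpos_right (hδle x y0) (sub_nonpos.mpr (h_mn_mx k i))
    linarith
  have h_lower : ∀ k i x, mn k i + δ * (mx k i - mn k i) ≤ (P ^ (N + k)) x i := by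
    intro k i x
    obtain ⟨y1, _, hy1⟩ := Finset.exists_mem_eq_sup' hU (fun x => (P ^ k) x i)
    rw [h_split]
    have hQrow : ∑ y, (P ^ N) x y = 1 := aux_pow_row P hrow N x
    have key : ∑ y, (P ^ N) x y * (P ^ k) y i
        = mn k i + ∑ y, (P ^ N) x y * ((P ^ k) y i - mn k i) := by
      simp only [mul_sub, Finset.sum_sub_distrib, ← Finset.sum_mul, hQrow, one_mul]
      ring
    rw [key]
    have hsum : (P ^ N) x y1 * ((P ^ k) y1 i - mn k i)
        ≤ ∑ y, (P ^ N) x y * ((P ^ k) y i - mn k i) :=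
      Finset.single_le_sum (fun y _ =>
        mul_nonneg (aux_pow_nonneg P hnonneg N x y)
          (sub_nonneg.mpr (h_mn_le k i y))) (Finset.mem_univ y1)
    have hy1' : (P ^ k) y1 i = mx k i := hy1.symm
    have hfinal : δ * (mx k i - mn k i) ≤ (P ^ N) x y1 * ((P ^ k) y1 i - mn k i) := by
      rw [hy1']
      exact mul_le_mul_of_nonneg_right (hδle x y1) (sub_nonneg.mpr (h_mn_mx k i))
    linarith
  -- oscillation
  set c : ℝ := max (1 - 2 * δ) 0 with hc
  have hc0 : 0 ≤ c := le_max_right _ _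
  have hc1 : c < 1 := max_lt (by linarith) one_pos
  set d : ℕ → Fin n → ℝ := fun k i => mx k i - mn k i with hd
  have hd0 : ∀ k i, 0 ≤ d k i := fun k i => sub_nonneg.mpr (h_mn_mx k i)
  have h_contr : ∀ k i, d (N + k) i ≤ c * d k i := by
    intro k i
    have h1 : mx (N + k) i ≤ mx k i + δ * (mn k i - mx k i) :=
      Finset.sup'_le _ _ fun x _ => h_upper k i x
    have h2 : mn k i + δ * (mx k i - mn k i) ≤ mn (N + k) i :=
      Finset.le_inf' _ _ fun x _ => h_lower k i x
    have h3 : d (N + k) i ≤ (1 - 2 * δ) * d k i := by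
      simp only [hd]
      nlinarith
    calc d (N + k) i ≤ (1 - 2 * δ) * d k i := h3
      _ ≤ c * d k i := mul_le_mul_of_nonneg_right (le_max_left _ _) (hd0 k i)
  have h_d_anti : ∀ i, Antitone fun k => d k i := by
    intro i
    refine antitone_nat_of_succ_le fun k => ?_
    have := h_mn_mono i (Nat.le_succ k)
    have := h_mx_anti i (Nat.le_succ k)
    simp only [hd]
    linarith
  have h_geom : ∀ i j, d (j * N) i ≤ c ^ j * d 0 i := by
    intro i j
    induction j with
    | zero => simp
    | succ j ih =>
      have : (j + 1) * N = N + j * N := by ring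
      rw [this]
      calc d (N + j * N) i ≤ c * d (j * N) i := h_contr _ i
        _ ≤ c * (c ^ j * d 0 i) := mul_le_mul_of_nonneg_left ih hc0
        _ = c ^ (j + 1) * d 0 i := by ring
  have h_d_bound : ∀ i k, d k i ≤ c ^ (k / N) * d 0 i := by
    intro i k
    calc d k i ≤ d (k / N * N) i := h_d_anti i (Nat.div_mul_le_self k N)
      _ ≤ c ^ (k / N) * d 0 i := h_geom i (k / N)
  have hdiv : Filter.Tendsto (fun k : ℕ => k / N) Filter.atTop Filter.atTop :=
    Filter.tendsto_atTop_atTop.mpr fun b =>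
      ⟨b * N, fun k hk => (Nat.le_div_iff_mul_le hN1).mpr hk⟩
  have h_d_zero : ∀ i, Filter.Tendsto (fun k => d k i) Filter.atTop (nhds 0) := by
    intro i
    have h1 : Filter.Tendsto (fun k : ℕ => c ^ (k / N) * d 0 i) Filter.atTop (nhds 0) := by
      have := ((tendsto_pow_atTop_nhds_zero_of_lt_one hc0 hc1).comp hdiv).mul_const (d 0 i)
      simpa using this
    exact squeeze_zero (fun k => hd0 k i) (fun k => h_d_bound i k) h1
  -- the stationary vector
  set π : Fin n → ℝ := fun i => ⨆ k, mn k i with hπ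
  have hbdd : ∀ i, BddAbove (Set.range fun k => mn k i) := by
    intro i
    refine ⟨mx 0 i, ?_⟩
    rintro _ ⟨k, rfl⟩
    exact le_trans (h_mn_mx k i) (h_mx_anti i (Nat.zero_le k))
  have h_mn_tendsto : ∀ i, Filter.Tendsto (fun k => mn k i) Filter.atTop (nhds (π i)) :=
    fun i => tendsto_atTop_ciSup (h_mn_mono i) (hbdd i)
  have h_mx_tendsto : ∀ i, Filter.Tendsto (fun k => mx k i) Filter.atTop (nhds (π i)) := by
    intro i
    have := (h_mn_tendsto i).add (h_d_zero i)
    simpa [hd] using this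
  have h_conv : ∀ x i, Filter.Tendsto (fun k : ℕ => (P ^ k) x i) Filter.atTop (nhds (π i)) :=
    fun x i => tendsto_of_tendsto_of_tendsto_of_le_of_le (h_mn_tendsto i) (h_mx_tendsto i)
      (fun k => h_mn_le k i x) (fun k => h_le_mx k i x)
  -- positivity
  have hpos : ∀ i, 0 < π i := by
    intro i
    have h1 : 0 < mn N i := by
      rw [hmn]
      rw [Finset.lt_inf'_iff]
      exact fun x _ => hNpos x i
    exact lt_of_lt_of_le h1 (le_ciSup (hbdd i) N)
  -- sum = 1
  let x0 : Fin n := ⟨0, hn⟩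
  have hsum1 : ∑ i, π i = 1 := by
    have h1 : Filter.Tendsto (fun k : ℕ => ∑ i, (P ^ k) x0 i) Filter.atTop
        (nhds (∑ i, π i)) := tendsto_finset_sum _ fun i _ => h_conv x0 i
    have h2 : (fun k : ℕ => ∑ i, (P ^ k) x0 i) = fun _ => (1 : ℝ) := by
      funext k; exact aux_pow_row P hrow k x0
    rw [h2] at h1
    exact (tendsto_nhds_unique tendsto_const_nhds h1).symm
  -- stationarity
  have hstat : Matrix.vecMul π P = π := by
    funext i
    have h1 : Filter.Tendsto (fun k : ℕ => (P ^ (k + 1)) x0 i) Filter.atTop (nhds (π i)) :=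
      (h_conv x0 i).comp (Filter.tendsto_add_atTop_nat 1)
    have h2 : (fun k : ℕ => (P ^ (k + 1)) x0 i)
        = fun k : ℕ => ∑ y, (P ^ k) x0 y * P y i := by
      funext k
      rw [pow_succ]
      simp [Matrix.mul_apply]
    rw [h2] at h1
    have h3 : Filter.Tendsto (fun k : ℕ => ∑ y, (P ^ k) x0 y * P y i) Filter.atTop
        (nhds (∑ y, π y * P y i)) :=
      tendsto_finset_sum _ fun y _ => (h_conv x0 y).mul_const (P y i)
    have h4 : ∑ y, π y * P y i = π i := tendsto_nhds_unique h3 h1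
    simpa [Matrix.vecMul, dotProduct] using h4
  refine ⟨π, ⟨fun i => (hpos i).le, hsum1, hstat⟩, ?_, hpos, h_conv⟩
  -- uniqueness
  rintro π' ⟨hp0, hp1, hpP⟩
  have hk : ∀ k, Matrix.vecMul π' (P ^ k) = π' := by
    intro k
    induction k with
    | zero => simp [Matrix.vecMul_one]
    | succ k ih => rw [pow_succ, ← Matrix.vecMul_vecMul, ih, hpP]
  funext i
  have h1 : Filter.Tendsto (fun k : ℕ => ∑ x, π' x * (P ^ k) x i) Filter.atTop
      (nhds (∑ x, π' x * π i)) :=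
    tendsto_finset_sum _ fun x _ => (h_conv x i).const_mul (π' x)
  have h2 : (fun k : ℕ => ∑ x, π' x * (P ^ k) x i) = fun _ => π' i := by
    funext k
    have := congrFun (hk k) i
    simpa [Matrix.vecMul, dotProduct] using this
  rw [h2] at h1
  have h3 : ∑ x, π' x * π i = π i := by
    rw [← Finset.sum_mul, hp1, one_mul]
  rw [h3] at h1
  exact tendsto_nhds_unique tendsto_const_nhds h1
end

section
/- Let n ≥ 1 and let P be an n×n real row-stochastic matrix that is irreducible, with stationary probability vector π (πᵀ P = πᵀ). Let S be a nonempty subset of the index set {1,…,n} and let k ≥ 1. Assume that for every i ∈ S and every m with 1 ≤ m < k one has Σ_{j∈S} (P^m)_{i,j} = 0, and that Σ_{j∈S} (P^k)_{i,j} = 1 for every i ∈ S (i.e., a walker started in S is outside S at all intermediate times 1,…,k−1 and returns to S at time k with probability 1: all paths between consecutive visits to S have the same length k). Define the matrix Q indexed by S × S by Q_{i,j} = (P^k)_{i,j}. Then Q is row-stochastic, and the normalized vector π′ with entries π′_i = π_i / (Σ_{j∈S} π_j) for i ∈ S satisfies π′ᵀ Q = π′ᵀ; that is, π′ is a stationary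 probability distribution (primary eigenvector) of the induced chain on S. -/
/-- If all paths between consecutive visits to a subset `S` of states have
the same length `k`, then the induced matrix `Q = (P^k)` restricted to `S` is
row-stochastic and the normalized restriction `π′` of the stationary vector `π` is a
stationary probability distribution of `Q`. -/
theorem induced_chain_stationary_of_equal_path_lengths
    (n k : ℕ) (hn : 1 ≤ n) (hk : 1 ≤ k) (P : Matrix (Fin n) (Fin n) ℝ)
    (hnonneg : ∀ i j, 0 ≤ P i j)
    (hrow : ∀ i, ∑ j, P i j = 1)
    (hirr : ∀ i j, ∃ m, 1 ≤ m ∧ 0 < (P ^ m) i j)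
    (π : Fin n → ℝ)
    (hπ0 : ∀ i, 0 ≤ π i) (hπ1 : (∑ i, π i) = 1)
    (hπP : Matrix.vecMul π P = π)
    (S : Finset (Fin n)) (hS : S.Nonempty)
    (hout : ∀ i ∈ S, ∀ m : ℕ, 1 ≤ m → m < k → (∑ j ∈ S, (P ^ m) i j) = 0)
    (hret : ∀ i ∈ S, (∑ j ∈ S, (P ^ k) i j) = 1)
    (Q : Matrix {i // i ∈ S} {i // i ∈ S} ℝ)
    (hQ : ∀ i j : {i // i ∈ S}, Q i j = (P ^ k) i.1 j.1)
    (π' : {i // i ∈ S} → ℝ)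
    (hπ' : ∀ i : {i // i ∈ S}, π' i = π i.1 / ∑ j ∈ S, π j) :
    ((∀ i j, 0 ≤ Q i j) ∧ (∀ i, ∑ j, Q i j = 1)) ∧
    Matrix.vecMul π' Q = π' := by
  -- powers of P are nonnegative
  have hpow0 : ∀ m : ℕ, ∀ i j, 0 ≤ (P ^ m) i j := by
    intro m
    induction m with
    | zero =>
      intro i j
      by_cases h : i = j <;> simp [Matrix.one_apply, h]
    | succ m ih =>
      intro i j
      rw [pow_succ, Matrix.mul_apply]
      exact Finset.sum_nonneg fun l _ => mul_nonneg (ih i l) (hnonneg l j)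
  -- powers of P are row-stochastic
  have hrowpow : ∀ m : ℕ, ∀ i, ∑ j, (P ^ m) i j = 1 := by
    intro m
    induction m with
    | zero => intro i; simp [Matrix.one_apply]
    | succ m ih =>
      intro i
      rw [pow_succ]
      simp only [Matrix.mul_apply]
      rw [Finset.sum_comm]
      calc ∑ l, ∑ j, (P ^ m) i l * P l j
          = ∑ l, (P ^ m) i l * ∑ j, P l j := by
            simp [Finset.mul_sum]
        _ = 1 := by simp [hrow, ih i]
  -- from S, at time k the chain is in S with probability 1
  have hA : ∀ i ∈ S, ∀ l, l ∉ S → (P ^ k) i l = 0 := by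
    intro i hi l hl
    have h1 : ∑ j ∈ Sᶜ, (P ^ k) i j = 0 := by
      have h2 := hrowpow k i
      rw [← Finset.sum_add_sum_compl S, hret i hi] at h2
      linarith
    exact (Finset.sum_eq_zero_iff_of_nonneg (fun j _ => hpow0 k i j)).mp h1 l
      (Finset.mem_compl.mpr hl)
  -- from S, at times that are multiples of k, the chain is in S
  have hB : ∀ q : ℕ, ∀ i ∈ S, ∀ l, l ∉ S → (P ^ (q * k)) i l = 0 := by
    intro q
    induction q with
    | zero =>
      intro i hi l hl
      have hne : i ≠ l := fun h => hl (h ▸ hi)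
      simp [Matrix.one_apply, hne]
    | succ q ih =>
      intro i hi l hl
      have hq : (q + 1) * k = q * k + k := by ring
      rw [hq, pow_add, Matrix.mul_apply]
      apply Finset.sum_eq_zero
      intro m _
      by_cases hm : m ∈ S
      · rw [hA m hm l hl, mul_zero]
      · rw [ih i hi m hm, zero_mul]
  -- from S, at times not multiple of k, the chain is outside S
  have hC : ∀ q r : ℕ, 1 ≤ r → r < k → ∀ i ∈ S,
      ∑ j ∈ S, (P ^ (q * k + r)) i j = 0 := by
    intro q r hr1 hr2 i hi
    simp only [pow_add, Matrix.mul_apply]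
    rw [Finset.sum_comm]
    apply Finset.sum_eq_zero
    intro m _
    by_cases hm : m ∈ S
    · rw [← Finset.mul_sum, hout m hm r hr1 hr2, mul_zero]
    · simp [hB q i hi m hm]
  -- from outside S, the chain cannot enter S at time exactly k
  have hD : ∀ i, i ∉ S → ∀ j ∈ S, (P ^ k) i j = 0 := by
    intro i hiS j hj
    by_contra hne
    have hpos : 0 < (P ^ k) i j := lt_of_le_of_ne (hpow0 k i j) (Ne.symm hne)
    obtain ⟨j0, hj0⟩ := hS
    obtain ⟨m, hm1, hmpos⟩ := hirr j0 i
    have hdiv : m % k ≠ 0 := by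
      intro h0
      have hmk : m = (m / k) * k :=
        (Nat.div_mul_cancel (Nat.dvd_of_mod_eq_zero h0)).symm
      rw [hmk, hB (m / k) j0 hj0 i hiS] at hmpos
      exact lt_irrefl 0 hmpos
    have key : ∑ j' ∈ S, (P ^ (m + k)) j0 j' = 0 := by
      have hmk : m + k = (m / k + 1) * k + m % k := by
        have h := Nat.div_add_mod m k
        calc m + k = k * (m / k) + m % k + k := by rw [h]
          _ = (m / k + 1) * k + m % k := by ring
      rw [hmk]
      exact hC _ _ (Nat.one_le_iff_ne_zero.mpr hdiv) (Nat.mod_lt m hk) j0 hj0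
    have hterm : (P ^ (m + k)) j0 j = 0 :=
      (Finset.sum_eq_zero_iff_of_nonneg (fun x _ => hpow0 _ j0 x)).mp key j hj
    have hge : (P ^ m) j0 i * (P ^ k) i j ≤ (P ^ (m + k)) j0 j := by
      rw [pow_add, Matrix.mul_apply]
      exact Finset.single_le_sum
        (fun l _ => mul_nonneg (hpow0 m j0 l) (hpow0 k l j)) (Finset.mem_univ i)
    nlinarith [mul_pos hmpos hpos]
  -- π is stationary for every power of P
  have hπpow : ∀ m : ℕ, Matrix.vecMul π (P ^ m) = π := by
    intro m
    induction m with
    | zero => simp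
    | succ m ih => rw [pow_succ, ← Matrix.vecMul_vecMul, ih, hπP]
  refine ⟨⟨fun i j => by rw [hQ]; exact hpow0 k i.1 j.1, fun i => ?_⟩, ?_⟩
  · -- row sums of Q
    calc ∑ j : {x // x ∈ S}, Q i j
        = ∑ j : {x // x ∈ S}, (P ^ k) i.1 j.1 := by
          exact Finset.sum_congr rfl fun j _ => hQ i j
      _ = ∑ j ∈ S, (P ^ k) i.1 j := Finset.sum_coe_sort S _
      _ = 1 := hret i.1 i.2
  · -- stationarity of π'
    funext j
    set c : ℝ := ∑ x ∈ S, π x with hc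
    have hstep : ∑ i ∈ S, π i * (P ^ k) i j.1 = π j.1 := by
      have h1 : ∑ i, π i * (P ^ k) i j.1 = π j.1 := by
        have := congrFun (hπpow k) j.1
        simpa [Matrix.vecMul, dotProduct] using this
      rw [← h1]
      apply Finset.sum_subset (Finset.subset_univ S)
      intro x _ hx
      rw [hD x hx j.1 j.2, mul_zero]
    calc Matrix.vecMul π' Q j
        = ∑ i : {x // x ∈ S}, π' i * Q i j := by
          simp [Matrix.vecMul, dotProduct]
      _ = ∑ i : {x // x ∈ S}, π i.1 * (P ^ k) i.1 j.1 / c := by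
          apply Finset.sum_congr rfl
          intro i _
          rw [hπ' i, hQ i j]
          ring
      _ = (∑ i ∈ S, π i * (P ^ k) i j.1) / c := by
          rw [← Finset.sum_div]
          congr 1
          exact Finset.sum_coe_sort S (fun x => π x * (P ^ k) x j.1)
      _ = π j.1 / c := by rw [hstep]
      _ = π' j := (hπ' j).symm
end

section
/- Let n ≥ 1, let A be an n×n real row-stochastic matrix, let δ ∈ (0,1), and let C = δA + (1−δ)B where B is the n×n matrix with every entry equal to 1/n. Then there exists a unique probability vector π ∈ ℝ^n satisfying πᵀ C = πᵀ; every entry of π is strictly positive; and for every starting index x and every index i, (C^k)_{x,i} converges to π_i as k → ∞. -/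
open Matrix Finset

lemma stoch_pow_nonneg {n : ℕ} {M : Matrix (Fin n) (Fin n) ℝ}
    (h : ∀ i j, 0 ≤ M i j) (k : ℕ) : ∀ i j, 0 ≤ (M ^ k) i j := by
  induction k with
  | zero => intro i j; rw [pow_zero, Matrix.one_apply]; positivity
  | succ k ih =>
    intro i j
    rw [pow_succ, Matrix.mul_apply]
    exact Finset.sum_nonneg fun l _ => mul_nonneg (ih i l) (h l j)

lemma stoch_pow_rowsum {n : ℕ} {M : Matrix (Fin n) (Fin n) ℝ}
    (h : ∀ i, ∑ j, M i j = 1) (k : ℕ) : ∀ i, ∑ j, (M ^ k) i j = 1 := by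
  induction k with
  | zero => intro i; simp [Matrix.one_apply]
  | succ k ih =>
    intro i
    simp only [pow_succ, Matrix.mul_apply]
    rw [Finset.sum_comm]
    simp only [← Finset.mul_sum, h]
    simpa using ih i



/-- The PageRank composite `C = δ A + (1 - δ) B` has a unique stationary
probability vector `π`; `π` is strictly positive and `(C^k) x i → π i` for every
starting state `x`. -/
theorem pagerank_unique_stationary_distribution
    (n : ℕ) (hn : 1 ≤ n) (A : Matrix (Fin n) (Fin n) ℝ)
    (hnonneg : ∀ i j, 0 ≤ A i j)
    (hrow : ∀ i, ∑ j, A i j = 1)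
    (δ : ℝ) (hδ0 : 0 < δ) (hδ1 : δ < 1)
    (B : Matrix (Fin n) (Fin n) ℝ) (hB : ∀ i j, B i j = 1 / n)
    (C : Matrix (Fin n) (Fin n) ℝ) (hC : C = δ • A + (1 - δ) • B) :
    ∃ π : Fin n → ℝ,
      ((∀ i, 0 ≤ π i) ∧ (∑ i, π i) = 1 ∧ Matrix.vecMul π C = π) ∧
      (∀ π' : Fin n → ℝ,
        ((∀ i, 0 ≤ π' i) ∧ (∑ i, π' i) = 1 ∧ Matrix.vecMul π' C = π') → π' = π) ∧
      (∀ i, 0 < π i) ∧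
      (∀ x i, Filter.Tendsto (fun k : ℕ => (C ^ k) x i) Filter.atTop (nhds (π i))) := by
  have hd : (0:ℝ) < 1 - δ := by linarith
  have hnR : (0:ℝ) < n := by exact_mod_cast hn
  -- entries of C
  have hCapp : ∀ i j, C i j = δ * A i j + (1 - δ) / n := by
    intro i j; simp [hC, hB i j, Matrix.add_apply, Matrix.smul_apply, smul_eq_mul]
    ring
  -- column sums of powers of A
  set s : ℕ → Fin n → ℝ := fun k j => ∑ i, (A ^ k) i j with hs_def
  have hs0 : ∀ j, s 0 j = 1 := by
    intro j; simp [hs_def, Matrix.one_apply]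
  have hsnn : ∀ k j, 0 ≤ s k j := fun k j =>
    Finset.sum_nonneg fun i _ => stoch_pow_nonneg hnonneg k i j
  have hsle : ∀ k j, s k j ≤ n := by
    intro k j
    calc s k j ≤ ∑ _i : Fin n, (1:ℝ) := Finset.sum_le_sum fun i _ => by
          have h1 := stoch_pow_rowsum hrow k i
          have := Finset.single_le_sum (f := fun j => (A ^ k) i j)
            (fun l _ => stoch_pow_nonneg hnonneg k i l) (Finset.mem_univ j)
          linarith
      _ = n := by simp
  have hssum : ∀ k, ∑ j, s k j = n := by
    intro k
    rw [hs_def]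
    simp only
    rw [Finset.sum_comm]
    simp [stoch_pow_rowsum hrow k]
  have hrec : ∀ k j, ∑ i, s k i * A i j = s (k + 1) j := by
    intro k j
    simp only [hs_def, Finset.sum_mul]
    rw [Finset.sum_comm]
    simp only [pow_succ, Matrix.mul_apply]
  -- summability
  have hsummand_nn : ∀ j (k : ℕ), 0 ≤ δ ^ k * s k j := fun j k =>
    mul_nonneg (pow_nonneg hδ0.le k) (hsnn k j)
  have hgeo : Summable (fun k : ℕ => δ ^ k * (n:ℝ)) := by
    simpa using (summable_geometric_of_lt_one hδ0.le hδ1).mul_right (n:ℝ)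
  have hsum : ∀ j, Summable (fun k : ℕ => δ ^ k * s k j) := by
    intro j
    exact Summable.of_nonneg_of_le (hsummand_nn j)
      (fun k => mul_le_mul_of_nonneg_left (hsle k j) (pow_nonneg hδ0.le k)) hgeo
  set π : Fin n → ℝ := fun j => (1 - δ) / n * ∑' k : ℕ, δ ^ k * s k j with hπ_def
  -- positivity
  have htsum_ge : ∀ j, 1 ≤ ∑' k : ℕ, δ ^ k * s k j := by
    intro j
    have := Summable.le_tsum (hsum j) 0 (fun k _ => hsummand_nn j k)
    simpa [hs0 j] using this
  have hπpos : ∀ j, 0 < π j := by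
    intro j
    have : (0:ℝ) < (1 - δ) / n := div_pos hd hnR
    calc (0:ℝ) < (1 - δ) / n * 1 := by linarith
      _ ≤ π j := by
          rw [hπ_def]
          exact mul_le_mul_of_nonneg_left (htsum_ge j) this.le
  have hπnn : ∀ j, 0 ≤ π j := fun j => (hπpos j).le
  -- sums to one
  have hπsum : ∑ j, π j = 1 := by
    have hswap : ∑ j, ∑' k : ℕ, δ ^ k * s k j = ∑' k : ℕ, ∑ j, δ ^ k * s k j :=
      (Summable.tsum_finsetSum (fun j _ => hsum j)).symm
    have : ∑' k : ℕ, ∑ j, δ ^ k * s k j = ∑' k : ℕ, δ ^ k * n := by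
      congr 1; funext k; rw [← Finset.mul_sum, hssum k]
    rw [hπ_def]
    simp only [← Finset.mul_sum]
    rw [hswap, this, tsum_mul_right, tsum_geometric_of_lt_one hδ0.le hδ1]
    field_simp
  -- fixed point
  have hπA : ∀ j, Matrix.vecMul π A j = (1 - δ) / n * ∑' k : ℕ, δ ^ k * s (k + 1) j := by
    intro j
    have h1 : Matrix.vecMul π A j = ∑ i, (1 - δ) / n * ((∑' k : ℕ, δ ^ k * s k i) * A i j) := by
      simp only [Matrix.vecMul, dotProduct, hπ_def]
      exact Finset.sum_congr rfl fun i _ => by ring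
    rw [h1, ← Finset.mul_sum]
    congr 1
    have h2 : ∀ i : Fin n, (∑' k : ℕ, δ ^ k * s k i) * A i j
        = ∑' k : ℕ, δ ^ k * s k i * A i j := fun i => (tsum_mul_right).symm
    simp only [h2]
    rw [← Summable.tsum_finsetSum (fun i _ => (hsum i).mul_right (A i j))]
    congr 1; funext k
    rw [← hrec k j, Finset.mul_sum]
    exact Finset.sum_congr rfl fun i _ => by ring
  have hfix : Matrix.vecMul π C = π := by
    funext j
    have hCj : Matrix.vecMul π C j
        = δ * Matrix.vecMul π A j + (1 - δ) / n := by
      simp only [Matrix.vecMul, dotProduct]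
      have : ∀ i, π i * C i j = δ * (π i * A i j) + (1 - δ) / n * π i := by
        intro i; rw [hCapp i j]; ring
      simp only [this, Finset.sum_add_distrib, ← Finset.mul_sum, hπsum]
      ring
    have hshift : ∑' k : ℕ, δ ^ k * s k j
        = 1 + ∑' k : ℕ, δ ^ (k + 1) * s (k + 1) j := by
      have := Summable.tsum_eq_zero_add (hsum j)
      simpa [hs0 j] using this
    have hmul : δ * ∑' k : ℕ, δ ^ k * s (k + 1) j
        = ∑' k : ℕ, δ ^ (k + 1) * s (k + 1) j := by
      rw [← tsum_mul_left]
      congr 1; funext k; ring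
    rw [hCj, hπA j, hπ_def]
    simp only
    rw [hshift]
    rw [← hmul]
    ring
  -- contraction lemmas
  have hA_contract : ∀ v : Fin n → ℝ, ∑ j, |Matrix.vecMul v A j| ≤ ∑ j, |v j| := by
    intro v
    calc ∑ j, |Matrix.vecMul v A j|
        ≤ ∑ j, ∑ i, |v i| * A i j := by
          refine Finset.sum_le_sum fun j _ => ?_
          simp only [Matrix.vecMul, dotProduct]
          refine (Finset.abs_sum_le_sum_abs _ _).trans (le_of_eq ?_)
          exact Finset.sum_congr rfl fun i _ => by
            rw [abs_mul, abs_of_nonneg (hnonneg i j)]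
      _ = ∑ i, |v i| := by
          rw [Finset.sum_comm]
          simp only [← Finset.mul_sum, hrow, mul_one]
  have hC_zero : ∀ v : Fin n → ℝ, ∑ i, v i = 0 →
      ∀ j, Matrix.vecMul v C j = δ * Matrix.vecMul v A j := by
    intro v hv j
    simp only [Matrix.vecMul, dotProduct]
    have : ∀ i, v i * C i j = δ * (v i * A i j) + (1 - δ) / n * v i := by
      intro i; rw [hCapp i j]; ring
    simp only [this, Finset.sum_add_distrib, ← Finset.mul_sum, hv]
    ring
  have hC_contract : ∀ v : Fin n → ℝ, ∑ i, v i = 0 →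
      ∑ j, |Matrix.vecMul v C j| ≤ δ * ∑ j, |v j| := by
    intro v hv
    calc ∑ j, |Matrix.vecMul v C j| = ∑ j, δ * |Matrix.vecMul v A j| := by
          refine Finset.sum_congr rfl fun j _ => ?_
          rw [hC_zero v hv j, abs_mul, abs_of_pos hδ0]
      _ = δ * ∑ j, |Matrix.vecMul v A j| := by rw [Finset.mul_sum]
      _ ≤ δ * ∑ j, |v j| := mul_le_mul_of_nonneg_left (hA_contract v) hδ0.le
  refine ⟨π, ⟨hπnn, hπsum, hfix⟩, ?_, hπpos, ?_⟩
  · -- uniqueness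
    rintro π' ⟨hπ'nn, hπ'sum, hπ'fix⟩
    set v : Fin n → ℝ := fun i => π' i - π i with hv_def
    have hv0 : ∑ i, v i = 0 := by simp [hv_def, Finset.sum_sub_distrib, hπsum, hπ'sum]
    have hvC : ∀ j, Matrix.vecMul v C j = v j := by
      intro j
      simp only [hv_def, Matrix.vecMul, dotProduct, sub_mul, Finset.sum_sub_distrib]
      have h1 : ∑ i, π' i * C i j = π' j := by
        have := congrFun hπ'fix j; simpa [Matrix.vecMul, dotProduct] using this
      have h2 : ∑ i, π i * C i j = π j := by
        have := congrFun hfix j; simpa [Matrix.vecMul, dotProduct] using this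
      rw [h1, h2]
    have hle : ∑ j, |v j| ≤ δ * ∑ j, |v j| := by
      have := hC_contract v hv0
      calc ∑ j, |v j| = ∑ j, |Matrix.vecMul v C j| := by
            refine Finset.sum_congr rfl fun j _ => by rw [hvC j]
        _ ≤ δ * ∑ j, |v j| := this
    have habs_nn : 0 ≤ ∑ j, |v j| := Finset.sum_nonneg fun j _ => abs_nonneg _
    have hzero : ∑ j, |v j| = 0 := by nlinarith
    funext i
    have : |v i| ≤ 0 := hzero ▸ Finset.single_le_sum (f := fun j => |v j|)
      (fun j _ => abs_nonneg _) (Finset.mem_univ i)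
    have : v i = 0 := abs_eq_zero.mp (le_antisymm this (abs_nonneg _))
    have := sub_eq_zero.mp this
    exact this
  · -- convergence
    intro x i
    have hCnn : ∀ i j, 0 ≤ C i j := by
      intro i j; rw [hCapp i j]
      have : (0:ℝ) ≤ (1 - δ) / n := (div_pos hd hnR).le
      have := mul_nonneg hδ0.le (hnonneg i j)
      linarith
    have hCrow : ∀ i, ∑ j, C i j = 1 := by
      intro i
      simp only [hCapp i]
      rw [Finset.sum_add_distrib, ← Finset.mul_sum, hrow]
      simp
      field_simp
      ring
    set p : ℕ → Fin n → ℝ := fun k j => (C ^ k) x j with hp_def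
    have hpsum : ∀ k, ∑ j, p k j = 1 := fun k => stoch_pow_rowsum hCrow k x
    have hprec : ∀ k, ∀ j, p (k + 1) j = Matrix.vecMul (p k) C j := by
      intro k j
      simp only [hp_def, pow_succ, Matrix.mul_apply, Matrix.vecMul, dotProduct]
    set M : ℝ := ∑ j, |p 0 j - π j| with hM_def
    have hbound : ∀ k, ∑ j, |p k j - π j| ≤ M * δ ^ k := by
      intro k
      induction k with
      | zero => simp [hM_def]
      | succ k ih =>
        have hv0 : ∑ j, (p k j - π j) = 0 := by
          rw [Finset.sum_sub_distrib, hpsum k, hπsum]; ring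
        have hvC : ∀ j, Matrix.vecMul (fun l => p k l - π l) C j = p (k + 1) j - π j := by
          intro j
          simp only [Matrix.vecMul, dotProduct, sub_mul, Finset.sum_sub_distrib]
          have h2 : ∑ l, π l * C l j = π j := by
            have := congrFun hfix j; simpa [Matrix.vecMul, dotProduct] using this
          rw [h2, hprec k j]
          simp [Matrix.vecMul, dotProduct]
        calc ∑ j, |p (k + 1) j - π j|
            = ∑ j, |Matrix.vecMul (fun l => p k l - π l) C j| := by
              refine Finset.sum_congr rfl fun j _ => by rw [hvC j]
          _ ≤ δ * ∑ j, |p k j - π j| := hC_contract _ hv0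
          _ ≤ δ * (M * δ ^ k) := mul_le_mul_of_nonneg_left ih hδ0.le
          _ = M * δ ^ (k + 1) := by ring
    have hpt : ∀ k, |p k i - π i| ≤ M * δ ^ k := by
      intro k
      refine le_trans ?_ (hbound k)
      exact Finset.single_le_sum (f := fun j => |p k j - π j|)
        (fun j _ => abs_nonneg _) (Finset.mem_univ i)
    have hlim0 : Filter.Tendsto (fun k : ℕ => M * δ ^ k) Filter.atTop (nhds 0) := by
      simpa using (tendsto_pow_atTop_nhds_zero_of_lt_one hδ0.le hδ1).const_mul M
    have hlim : Filter.Tendsto (fun k : ℕ => p k i - π i) Filter.atTop (nhds 0) :=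
      squeeze_zero_norm (fun k => by simpa [Real.norm_eq_abs] using hpt k) hlim0
    have := hlim.add_const (π i)
    simpa [hp_def] using this
end
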